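/- Suppose n = 2m. Fix a potential outcome table y, α ∈ (0,1), and an arbitrary (possibly data-dependent) missingness indicator J ∈ {0,1}^n, with partially observed data M ∈ {−1,0,1}^n given by M_i = −J_i + (1−J_i)Y_i. Then P(τ(y) ∈ I°_α(M, Z)) ≥ 1 − α, where the probability is over the uniform random assignment Z and I°_α(M,Z) = [L_α(Y⁽⁻⁾, Z), U_α(Y⁽⁺⁾, Z)] is built from the two extremal imputations of the missing outcomes. No assumption is made on the distribution of J. -/

import Mathlib

open Finset

/-- Real value of a binary outcome. -/
noncomputable def b2r (b : Bool) : ℝ := if b then 1 else 0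

/-- All assignments of `n` subjects in which exactly `m` receive treatment. -/
def Assign (n m : ℕ) : Finset (Fin n → Bool) :=
  Finset.univ.filter fun z => (Finset.univ.filter fun i => z i = true).card = m

/-- Probability of the event `E` under the uniform distribution on `Assign n m`. -/
noncomputable def Pr (n m : ℕ) (E : (Fin n → Bool) → Prop) : ℝ :=
  haveI : DecidablePred E := fun z => Classical.propDecidable (E z)
  (((Assign n m).filter E).card : ℝ) / ((Assign n m).card : ℝ)

/-- The sample average treatment effect `τ(w)`.  For a table `w`, `(w i).1` is the
control potential outcome `w_i(0)` and `(w i).2` is the treatment potential outcome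
`w_i(1)`. -/
noncomputable def sate (n : ℕ) (w : Fin n → Bool × Bool) : ℝ :=
  (∑ j, (b2r (w j).2 - b2r (w j).1)) / (n : ℝ)

/-- Observed outcomes generated by the table `w` under the assignment `z`. -/
def obsOutcome (n : ℕ) (w : Fin n → Bool × Bool) (z : Fin n → Bool) : Fin n → Bool :=
  fun j => if z j then (w j).2 else (w j).1

/-- The Neyman difference-in-means estimator `T(Y, z)`. -/
noncomputable def neyman (n m : ℕ) (Y z : Fin n → Bool) : ℝ :=
  (∑ j, if z j then b2r (Y j) else 0) / (m : ℝ)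
    - (∑ j, if z j then 0 else b2r (Y j)) / ((n : ℝ) - (m : ℝ))

/-- Permutation `p`-value of the table `w` given observed data `(Y, z)`. -/
noncomputable def pval (n m : ℕ) (w : Fin n → Bool × Bool) (Y z : Fin n → Bool) : ℝ :=
  Pr n m fun z' =>
    |neyman n m (obsOutcome n w z') z' - sate n w| ≥ |neyman n m Y z - sate n w|

/-- The table `w` is possible given the observed data `(Y, z)`. -/
def PossibleTable (n : ℕ) (w : Fin n → Bool × Bool) (Y z : Fin n → Bool) : Prop :=
  ∀ j, (z j = true → (w j).2 = Y j) ∧ (z j = false → (w j).1 = Y j)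

/-- Lower endpoint `L_α` of the exact confidence interval `I_α`. -/
noncomputable def Lb (n m : ℕ) (α : ℝ) (Y z : Fin n → Bool) : ℝ :=
  sInf {t : ℝ | ∃ w, PossibleTable n w Y z ∧ α ≤ pval n m w Y z ∧ sate n w = t}

/-- Upper endpoint `U_α` of the exact confidence interval `I_α`. -/
noncomputable def Ub (n m : ℕ) (α : ℝ) (Y z : Fin n → Bool) : ℝ :=
  sSup {t : ℝ | ∃ w, PossibleTable n w Y z ∧ α ≤ pval n m w Y z ∧ sate n w = t}

/-- `vcount n w a b` is the number of subjects whose treatment potential outcome is `a`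
and whose control potential outcome is `b`; e.g. `vcount n w true false = v₁₀`. -/
def vcount (n : ℕ) (w : Fin n → Bool × Bool) (a b : Bool) : ℕ :=
  (Finset.univ.filter fun i => (w i).2 = a ∧ (w i).1 = b).card

/-- `ncount n Y z a b = n_{ab}`, the number of subjects with assignment `a` and
observed outcome `b`. -/
def ncount (n : ℕ) (Y z : Fin n → Bool) (a b : Bool) : ℕ :=
  (Finset.univ.filter fun j => z j = a ∧ Y j = b).card

/-- The pmf of the Neyman estimator `T(w, Z)` under the uniform random assignment. -/
noncomputable def pmfT (n m : ℕ) (w : Fin n → Bool × Bool) : ℝ → ℝ :=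
  fun t => Pr n m fun z => neyman n m (obsOutcome n w z) z = t

/-- The lattice `m⁻¹ ℤ ⊆ ℝ`. -/
def lattZ (m : ℕ) : Set ℝ := {x | ∃ k : ℤ, x = (k : ℝ) / (m : ℝ)}

/-- The lattice `m⁻¹ (2ℤ) ⊆ ℝ`. -/
def lattEven (m : ℕ) : Set ℝ := {x | ∃ k : ℤ, x = (2 * (k : ℝ)) / (m : ℝ)}

/-- The lattice `m⁻¹ (2ℤ + 1) ⊆ ℝ`. -/
def lattOdd (m : ℕ) : Set ℝ := {x | ∃ k : ℤ, x = (2 * (k : ℝ) + 1) / (m : ℝ)}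

/-- `f` is symmetric about `μ` and decreasing away from `μ` along the lattice `L`
(symmetric–decreasing, SD). -/
def SDon (f : ℝ → ℝ) (L : Set ℝ) (μ : ℝ) : Prop :=
  (∀ x : ℝ, μ + x ∈ L → f (μ - x) = f (μ + x)) ∧
    ∀ x y : ℝ, 0 ≤ x → x ≤ y → μ + x ∈ L → μ + y ∈ L → f (μ + y) ≤ f (μ + x)


/-! ### Auxiliary machinery -/

namespace Stmt4Aux

noncomputable def eps (n : ℕ) (z : Fin n → Bool) (j : Fin n) : ℝ := if z j then 1 else -1

noncomputable def sv (n : ℕ) (w : Fin n → Bool × Bool) (j : Fin n) : ℝ :=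
  b2r (w j).2 + b2r (w j).1

noncomputable def sig (n : ℕ) (z Y : Fin n → Bool) (j : Fin n) : ℝ :=
  eps n z j * (2 * b2r (Y j) - 1)

lemma b2r_not (x : Bool) : b2r (!x) = 1 - b2r x := by cases x <;> simp [b2r]

lemma b2r_nonneg (x : Bool) : 0 ≤ b2r x := by cases x <;> simp [b2r]

lemma b2r_le_one (x : Bool) : b2r x ≤ 1 := by cases x <;> simp [b2r]

lemma eps_abs {n : ℕ} (z : Fin n → Bool) (j : Fin n) : |eps n z j| = 1 := by
  unfold eps; by_cases h : z j = true <;> simp [h]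

lemma mem_Assign {n m : ℕ} {z : Fin n → Bool} :
    z ∈ Assign n m ↔ (Finset.univ.filter fun i => z i = true).card = m := by
  simp [Assign]

lemma div_le_div_same' {a b c : ℝ} (hc : 0 < c) (h : a ≤ b) : a / c ≤ b / c := by
  rw [div_le_div_iff₀ hc hc]
  exact mul_le_mul_of_nonneg_right h hc.le

lemma Assign_nonempty {n m : ℕ} (hm : 0 < m) (hn : n = 2 * m) : (Assign n m).Nonempty := by
  classical
  have hmn : m ≤ (Finset.univ : Finset (Fin n)).card := by
    simp only [Finset.card_univ, Fintype.card_fin]; omega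
  obtain ⟨s, -, hs⟩ := Finset.exists_subset_card_eq hmn
  refine ⟨fun i => decide (i ∈ s), ?_⟩
  rw [mem_Assign]
  have : (Finset.univ.filter fun i => decide (i ∈ s) = true) = s := by
    ext i; simp
  rw [this, hs]

lemma Assign_card_pos {n m : ℕ} (hm : 0 < m) (hn : n = 2 * m) :
    0 < ((Assign n m).card : ℝ) := by
  exact_mod_cast Finset.card_pos.2 (Assign_nonempty hm hn)

lemma Pr_nonneg {n m : ℕ} (E : (Fin n → Bool) → Prop) : 0 ≤ Pr n m E := by
  unfold Pr; positivity

lemma Pr_mono {n m : ℕ} (hm : 0 < m) (hn : n = 2 * m) {E E' : (Fin n → Bool) → Prop}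
    (h : ∀ z ∈ Assign n m, E z → E' z) : Pr n m E ≤ Pr n m E' := by
  unfold Pr
  apply div_le_div_same' (Assign_card_pos hm hn)
  have hsub : ∀ (d1 : DecidablePred E) (d2 : DecidablePred E'),
      ((Assign n m).filter E).card ≤ ((Assign n m).filter E').card := by
    intro d1 d2
    apply Finset.card_le_card
    intro x hx
    rw [Finset.mem_filter] at hx ⊢
    exact ⟨hx.1, h x hx.1 hx.2⟩
  exact_mod_cast hsub _ _

lemma Pr_congr {n m : ℕ} {E E' : (Fin n → Bool) → Prop}
    (h : ∀ z ∈ Assign n m, E z ↔ E' z) : Pr n m E = Pr n m E' := by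
  classical
  unfold Pr
  rw [Finset.filter_congr h]

lemma Pr_full {n m : ℕ} (hm : 0 < m) (hn : n = 2 * m) {E : (Fin n → Bool) → Prop}
    (h : ∀ z ∈ Assign n m, E z) : Pr n m E = 1 := by
  classical
  unfold Pr
  rw [Finset.filter_true_of_mem h, div_self (ne_of_gt (Assign_card_pos hm hn))]

end Stmt4Aux

namespace Stmt4Aux

lemma validity {n m : ℕ} (hm : 0 < m) (hn : n = 2 * m) (f : (Fin n → Bool) → ℝ)
    {α : ℝ} (hα : 0 ≤ α) :
    1 - α ≤ Pr n m fun z => α ≤ Pr n m fun z' => f z' ≥ f z := by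
  classical
  set N : ℝ := ((Assign n m).card : ℝ) with hN
  have hNpos : 0 < N := Assign_card_pos hm hn
  set P : (Fin n → Bool) → Prop := fun z => α ≤ Pr n m fun z' => f z' ≥ f z with hP
  have hsplit : (((Assign n m).filter P).card : ℝ)
      + (((Assign n m).filter fun z => ¬ P z).card : ℝ) = N := by
    rw [hN]
    exact_mod_cast Finset.card_filter_add_card_filter_not (s := Assign n m) P
  have hbad : (((Assign n m).filter fun z => ¬ P z).card : ℝ) ≤ α * N := by
    by_cases hne : ((Assign n m).filter fun z => ¬ P z).Nonempty
    · obtain ⟨z0, hz0, hmin⟩ := Finset.exists_min_image _ f hne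
      have hz0' := Finset.mem_filter.1 hz0
      have hlt : Pr n m (fun z' => f z' ≥ f z0) < α := not_le.1 hz0'.2
      have h2 : (((Assign n m).filter fun z' => f z' ≥ f z0).card : ℝ) < α * N := by
        unfold Pr at hlt
        rw [div_lt_iff₀ hNpos] at hlt
        calc (((Assign n m).filter fun z' => f z' ≥ f z0).card : ℝ)
            = _ := by norm_num
          _ < α * N := hlt
      have h1 : (((Assign n m).filter fun z => ¬ P z).card : ℝ)
          ≤ (((Assign n m).filter fun z' => f z' ≥ f z0).card : ℝ) := by
        have hsub : ((Assign n m).filter fun z => ¬ P z)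
            ⊆ ((Assign n m).filter fun z' => f z' ≥ f z0) := by
          intro x hx
          have hx' := Finset.mem_filter.1 hx
          exact Finset.mem_filter.2 ⟨hx'.1, hmin x hx⟩
        exact_mod_cast Finset.card_le_card hsub
      linarith
    · rw [Finset.not_nonempty_iff_eq_empty] at hne
      rw [hne]
      simp only [Finset.card_empty, Nat.cast_zero]
      positivity
  show 1 - α ≤ Pr n m P
  unfold Pr
  rw [le_div_iff₀ hNpos]
  have : (((Assign n m).filter P).card : ℝ) = N - (((Assign n m).filter fun z => ¬ P z).card : ℝ) := by
    linarith
  nlinarith [hbad, hNpos]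

lemma sum_eps {n m : ℕ} (hm : 0 < m) (hn : n = 2 * m) {z : Fin n → Bool}
    (hz : z ∈ Assign n m) : ∑ j, eps n z j = 0 := by
  classical
  have hcard : ((Finset.univ.filter fun i => z i = true).card : ℝ) = m := by
    exact_mod_cast congrArg Nat.cast (mem_Assign.1 hz)
  have hpt : ∀ j, eps n z j = 2 * (if z j = true then (1:ℝ) else 0) - 1 := by
    intro j; by_cases h : z j = true <;> simp [eps, h] <;> norm_num
  rw [Finset.sum_congr rfl fun j _ => hpt j, Finset.sum_sub_distrib, ← Finset.mul_sum,
    Finset.sum_boole, Finset.sum_const, Finset.card_univ, Fintype.card_fin]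
  rw [hcard]
  subst hn
  push_cast
  ring

lemma dev_formula {n m : ℕ} (hm : 0 < m) (hn : n = 2 * m) {z : Fin n → Bool}
    (hz : z ∈ Assign n m) (w : Fin n → Bool × Bool) :
    neyman n m (obsOutcome n w z) z - sate n w = (∑ j, eps n z j * sv n w j) / (2 * m) := by
  classical
  have hm' : ((m : ℝ)) ≠ 0 := by exact_mod_cast hm.ne'
  have hnm : ((n : ℝ)) - m = m := by subst hn; push_cast; ring
  have hnne : ((n : ℝ)) ≠ 0 := by subst hn; push_cast; positivity
  unfold neyman sate obsOutcome eps sv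
  rw [hnm]
  have e1 : (∑ j, if z j then b2r (if z j then (w j).2 else (w j).1) else (0:ℝ))
      = ∑ j, if z j then b2r (w j).2 else 0 :=
    Finset.sum_congr rfl fun j _ => by by_cases h : z j = true <;> simp [h]
  have e2 : (∑ j, if z j then (0:ℝ) else b2r (if z j then (w j).2 else (w j).1))
      = ∑ j, if z j then 0 else b2r (w j).1 :=
    Finset.sum_congr rfl fun j _ => by by_cases h : z j = true <;> simp [h]
  rw [e1, e2]
  have e3 : (∑ j, (if z j then (1:ℝ) else -1) * (b2r (w j).2 + b2r (w j).1))
      = 2 * (∑ j, if z j then b2r (w j).2 else 0) - 2 * (∑ j, if z j then 0 else b2r (w j).1)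
        - (∑ j, b2r (w j).2) + (∑ j, b2r (w j).1) := by
    rw [Finset.mul_sum, Finset.mul_sum, ← Finset.sum_sub_distrib, ← Finset.sum_sub_distrib,
      ← Finset.sum_add_distrib]
    exact Finset.sum_congr rfl fun j _ => by by_cases h : z j = true <;> simp [h] <;> ring
  rw [e3, Finset.sum_sub_distrib]
  have hnR : ((n : ℝ)) = 2 * m := by exact_mod_cast congrArg Nat.cast hn
  rw [hnR]
  have h2m : ((2 * m : ℝ)) ≠ 0 := by positivity
  field_simp
  ring

end Stmt4Aux

namespace Stmt4Aux

lemma sv_one_bound (n : ℕ) (y : Fin n → Bool × Bool) (j : Fin n) : |1 - sv n y j| ≤ 1 := by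
  cases h1 : (y j).1 <;> cases h2 : (y j).2 <;> simp [sv, h1, h2, b2r] <;> norm_num

lemma core {n m : ℕ} (hm : 0 < m) (hn : n = 2 * m) (y : Fin n → Bool × Bool)
    {z : Fin n → Bool} (hz : z ∈ Assign n m) {α : ℝ} (hα1 : α ≤ 1)
    (Yim : Fin n → Bool)
    (hYim : ∀ j, Yim j = obsOutcome n y z j ∨ (Yim j = z j ∧ obsOutcome n y z j = !(z j)))
    (hval : α ≤ Pr n m fun z' =>
      |∑ j, eps n z' j * sv n y j| ≥ |∑ j, eps n z j * sv n y j|) :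
    ∃ w, PossibleTable n w Yim z ∧ α ≤ pval n m w Yim z ∧ sate n y ≤ sate n w := by
  classical
  have hn0 : (0:ℝ) < n := by
    have : 0 < n := by omega
    exact_mod_cast this
  have h2m : (0:ℝ) < 2 * m := by positivity
  set c : ℝ := ∑ j, eps n z j * sv n y j with hc
  set K : ℝ := ∑ j, (sig n z Yim j - sig n z (obsOutcome n y z) j) with hK
  have hsatey : sate n y = ((∑ j, sig n z (obsOutcome n y z) j) - c) / n := by
    unfold sate
    congr 1
    have hpt : ∀ j, b2r (y j).2 - b2r (y j).1
        = (sig n z (obsOutcome n y z) j - eps n z j * sv n y j) + eps n z j := by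
      intro j
      by_cases h : z j = true <;> simp [sig, eps, sv, obsOutcome, h] <;> ring
    rw [Finset.sum_congr rfl fun j _ => hpt j, Finset.sum_add_distrib,
      Finset.sum_sub_distrib, sum_eps hm hn hz, add_zero, hc]
  rcases le_or_gt 0 (c + K) with hA | hB
  · -- Case A : use the all-zero table
    set w0 : Fin n → Bool × Bool :=
      fun j => if z j then (!(Yim j), Yim j) else (Yim j, !(Yim j)) with hw0
    have hposs : PossibleTable n w0 Yim z := by
      intro j
      constructor <;> intro h <;> simp [hw0, h]
    have hobs : obsOutcome n w0 z = Yim := by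
      funext j
      by_cases h : z j = true <;> simp [obsOutcome, hw0, h]
    have hsv : ∀ j, sv n w0 j = 1 := by
      intro j
      by_cases h : z j = true <;> cases hY : Yim j <;>
        simp [sv, hw0, h, hY, b2r] <;> norm_num
    have hdevz : neyman n m Yim z - sate n w0 = 0 := by
      conv_lhs => rw [← hobs]
      rw [dev_formula hm hn hz w0]
      have : (∑ j, eps n z j * sv n w0 j) = ∑ j, eps n z j := by
        apply Finset.sum_congr rfl
        intro j _
        rw [hsv j, mul_one]
      rw [this, sum_eps hm hn hz, zero_div]
    have hpval : pval n m w0 Yim z = 1 := by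
      unfold pval
      rw [hdevz]
      apply Pr_full hm hn
      intro z' _
      simp only [abs_zero, ge_iff_le]
      exact abs_nonneg _
    refine ⟨w0, hposs, by rw [hpval]; exact hα1, ?_⟩
    have hsate0 : sate n w0 = (∑ j, sig n z Yim j) / n := by
      unfold sate
      congr 1
      apply Finset.sum_congr rfl
      intro j _
      by_cases h : z j = true <;> cases hY : Yim j <;>
        simp [hw0, sig, eps, b2r, h, hY] <;> norm_num
    rw [hsatey, hsate0]
    apply div_le_div_same' hn0
    have hK' : K = (∑ j, sig n z Yim j) - ∑ j, sig n z (obsOutcome n y z) j := by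
      rw [hK, Finset.sum_sub_distrib]
    linarith
  · -- Case B : keep y, flip the mismatched coordinates to (false, true)
    set ob : Fin n → Bool := obsOutcome n y z with hob
    set w0 : Fin n → Bool × Bool :=
      fun j => if Yim j = ob j then y j else (false, true) with hw0
    have hflip : ∀ j, ¬(Yim j = ob j) → (Yim j = z j ∧ ob j = !(z j)) := by
      intro j h
      exact (hYim j).resolve_left h
    have hposs : PossibleTable n w0 Yim z := by
      intro j
      by_cases hf : Yim j = ob j
      · constructor <;> intro h <;> simp only [hw0, if_pos hf] <;>
          · rw [hf, hob]; simp [obsOutcome, h]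
      · obtain ⟨h1, h2⟩ := hflip j hf
        constructor <;> intro h <;> simp only [hw0, if_neg hf] <;>
          · rw [h1, h]
    have hobs : obsOutcome n w0 z = Yim := by
      funext j
      by_cases hf : Yim j = ob j
      · by_cases h : z j = true <;> rw [hf, hob] <;> simp [obsOutcome, hw0, if_pos, hf, h]
      · obtain ⟨h1, h2⟩ := hflip j hf
        by_cases h : z j = true <;> simp [obsOutcome, hw0, if_neg hf, h, h1]
    have hsv : ∀ j, sv n w0 j = if Yim j = ob j then sv n y j else 1 := by
      intro j
      by_cases hf : Yim j = ob j <;> simp [sv, hw0, hf, b2r]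
    set dd : Fin n → ℝ := fun j => if Yim j = ob j then 0 else |1 - sv n y j| with hdd
    set D : ℝ := ∑ j, dd j with hD
    have hDnn : 0 ≤ D := by
      apply Finset.sum_nonneg
      intro j _
      simp only [hdd]
      split
      · exact le_rfl
      · exact abs_nonneg _
    have hkey : ∀ j, ¬(Yim j = ob j) → eps n z j * (1 - sv n y j) = |1 - sv n y j| := by
      intro j hf
      obtain ⟨h1, h2⟩ := hflip j hf
      by_cases h : z j = true
      · have hy2 : (y j).2 = false := by
          have : ob j = (y j).2 := by rw [hob]; simp [obsOutcome, h]
          rw [← this, h2, h]; rfl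
        cases hy1 : (y j).1 <;> simp [eps, sv, h, hy2, hy1, b2r] <;> norm_num
      · have hy1 : (y j).1 = true := by
          have : ob j = (y j).1 := by rw [hob]; simp [obsOutcome, h]
          have hzj : z j = false := by revert h; cases z j <;> simp
          rw [← this, h2, hzj]; rfl
        cases hy2 : (y j).2 <;> simp [eps, sv, h, hy1, hy2, b2r] <;> norm_num
    have hcD : (∑ j, eps n z j * sv n w0 j) = c + D := by
      rw [hc, hD, ← Finset.sum_add_distrib]
      apply Finset.sum_congr rfl
      intro j _
      by_cases hf : Yim j = ob j
      · simp [hsv j, hdd, hf]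
      · have h' : eps n z j * sv n w0 j
            = eps n z j * sv n y j + eps n z j * (1 - sv n y j) := by
          rw [hsv j, if_neg hf]; ring
        rw [h', hkey j hf]
        simp [hdd, hf]
    have hDK : D ≤ K := by
      rw [hD, hK]
      apply Finset.sum_le_sum
      intro j _
      by_cases hf : Yim j = ob j
      · simp [hdd, hf, sig, hob]
      · obtain ⟨h1, h2⟩ := hflip j hf
        have hs : |1 - sv n y j| ≤ 1 := sv_one_bound n y j
        have hsig : sig n z Yim j - sig n z (obsOutcome n y z) j = 2 := by
          rw [← hob]
          by_cases h : z j = true <;>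
            simp [sig, eps, h, h1, h2, b2r] <;> norm_num
        rw [hsig]
        simp only [hdd, if_neg hf]
        linarith
    have hcneg : c + D < 0 := by linarith
    have hcneg' : c < 0 := by linarith
    have habs : |c + D| = |c| - D := by
      rw [abs_of_neg hcneg, abs_of_neg hcneg']; ring
    refine ⟨w0, hposs, ?_, ?_⟩
    · -- p-value
      have hdevz : neyman n m Yim z - sate n w0 = (c + D) / (2 * m) := by
        conv_lhs => rw [← hobs]
        rw [dev_formula hm hn hz w0, hcD]
      refine le_trans hval ?_
      unfold pval
      rw [hdevz]
      apply Pr_mono hm hn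
      intro z' hz' hg
      rw [ge_iff_le] at hg ⊢
      rw [dev_formula hm hn hz' w0, abs_div, abs_div, abs_of_pos h2m]
      apply div_le_div_same' h2m
      have hptw : |(∑ j, eps n z' j * sv n w0 j) - ∑ j, eps n z' j * sv n y j| ≤ D := by
        rw [← Finset.sum_sub_distrib]
        refine (Finset.abs_sum_le_sum_abs _ _).trans ?_
        rw [hD]
        apply Finset.sum_le_sum
        intro j _
        by_cases hf : Yim j = ob j
        · simp [hsv j, hdd, hf]
        · have h' : eps n z' j * sv n w0 j - eps n z' j * sv n y j
              = eps n z' j * (1 - sv n y j) := by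
            rw [hsv j, if_neg hf]; ring
          rw [h', abs_mul, eps_abs, one_mul]
          simp [hdd, hf]
      have htri : |∑ j, eps n z' j * sv n y j| - D ≤ |∑ j, eps n z' j * sv n w0 j| := by
        have := abs_sub_abs_le_abs_sub (∑ j, eps n z' j * sv n y j)
          (∑ j, eps n z' j * sv n w0 j)
        rw [abs_sub_comm] at this
        linarith
      calc |c + D| = |c| - D := habs
        _ ≤ |∑ j, eps n z' j * sv n y j| - D := by rw [hc] at hg ⊢; linarith
        _ ≤ |∑ j, eps n z' j * sv n w0 j| := htri
    · -- sate
      unfold sate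
      apply div_le_div_same' hn0
      apply Finset.sum_le_sum
      intro j _
      by_cases hf : Yim j = ob j
      · simp [hw0, hf]
      · simp only [hw0, if_neg hf]
        cases hy1 : (y j).1 <;> cases hy2 : (y j).2 <;> simp [b2r, hy1, hy2] <;> norm_num

end Stmt4Aux

namespace Stmt4Aux

def flipT (n : ℕ) (w : Fin n → Bool × Bool) : Fin n → Bool × Bool :=
  fun j => (!(w j).1, !(w j).2)

lemma obs_flip {n : ℕ} (w : Fin n → Bool × Bool) (z : Fin n → Bool) :
    obsOutcome n (flipT n w) z = fun j => !(obsOutcome n w z j) := by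
  funext j
  by_cases h : z j = true <;> simp [obsOutcome, flipT, h]

lemma sate_flip {n : ℕ} (w : Fin n → Bool × Bool) : sate n (flipT n w) = - sate n w := by
  unfold sate
  have hpt : (∑ j, (b2r (flipT n w j).2 - b2r (flipT n w j).1))
      = -∑ j, (b2r (w j).2 - b2r (w j).1) := by
    rw [← Finset.sum_neg_distrib]
    apply Finset.sum_congr rfl
    intro j _
    simp only [flipT]
    rw [b2r_not, b2r_not]
    ring
  rw [hpt, neg_div]

lemma sv_flip {n : ℕ} (w : Fin n → Bool × Bool) (j : Fin n) :
    sv n (flipT n w) j = 2 - sv n w j := by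
  simp [sv, flipT, b2r_not]
  ring

lemma possible_flip {n : ℕ} {w : Fin n → Bool × Bool} {Y z : Fin n → Bool}
    (h : PossibleTable n w Y z) :
    PossibleTable n (flipT n w) (fun j => !(Y j)) z := by
  intro j
  exact ⟨fun hz => by rw [flipT]; simp [(h j).1 hz], fun hz => by rw [flipT]; simp [(h j).2 hz]⟩

lemma neyman_flip {n m : ℕ} (hm : 0 < m) (hn : n = 2 * m) {z : Fin n → Bool}
    (hz : z ∈ Assign n m) (Y : Fin n → Bool) :
    neyman n m (fun j => !(Y j)) z = - neyman n m Y z := by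
  classical
  have hm' : ((m : ℝ)) ≠ 0 := by exact_mod_cast hm.ne'
  have hnm : ((n : ℝ)) - m = m := by
    have : ((n:ℝ)) = 2*m := by exact_mod_cast congrArg Nat.cast hn
    rw [this]; ring
  have hcard : ((Finset.univ.filter fun i => z i = true).card : ℝ) = m := by
    exact_mod_cast congrArg Nat.cast (mem_Assign.1 hz)
  have hfil1 : (∑ j, if z j then (1:ℝ) else 0) = m := by
    rw [Finset.sum_boole]; exact hcard
  have hfil2 : (∑ j, if z j then (0:ℝ) else 1) = m := by
    have hpt : ∀ j, (if z j then (0:ℝ) else 1) = 1 - (if z j then (1:ℝ) else 0) := by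
      intro j; by_cases h : z j = true <;> simp [h]
    rw [Finset.sum_congr rfl fun j _ => hpt j, Finset.sum_sub_distrib, hfil1,
      Finset.sum_const, Finset.card_univ, Fintype.card_fin, nsmul_eq_mul, mul_one]
    have : ((n:ℝ)) = 2*m := by exact_mod_cast congrArg Nat.cast hn
    rw [this]; ring
  unfold neyman
  rw [hnm]
  have hP : (∑ j, if z j then b2r (!(Y j)) else (0:ℝ))
      = m - ∑ j, (if z j then b2r (Y j) else 0) := by
    have hpt : ∀ j, (if z j then b2r (!(Y j)) else (0:ℝ))
        = (if z j then (1:ℝ) else 0) - (if z j then b2r (Y j) else 0) := by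
      intro j; by_cases h : z j = true <;> simp [h, b2r_not]
    rw [Finset.sum_congr rfl fun j _ => hpt j, Finset.sum_sub_distrib, hfil1]
  have hQ : (∑ j, if z j then (0:ℝ) else b2r (!(Y j)))
      = m - ∑ j, (if z j then 0 else b2r (Y j)) := by
    have hpt : ∀ j, (if z j then (0:ℝ) else b2r (!(Y j)))
        = (if z j then (0:ℝ) else 1) - (if z j then 0 else b2r (Y j)) := by
      intro j; by_cases h : z j = true <;> simp [h, b2r_not]
    rw [Finset.sum_congr rfl fun j _ => hpt j, Finset.sum_sub_distrib, hfil2]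
  rw [hP, hQ]
  field_simp
  ring

lemma pval_flip {n m : ℕ} (hm : 0 < m) (hn : n = 2 * m) {z : Fin n → Bool}
    (hz : z ∈ Assign n m) (w : Fin n → Bool × Bool) (Y : Fin n → Bool) :
    pval n m (flipT n w) (fun j => !(Y j)) z = pval n m w Y z := by
  unfold pval
  have h2 : |neyman n m (fun j => !(Y j)) z - sate n (flipT n w)|
      = |neyman n m Y z - sate n w| := by
    rw [neyman_flip hm hn hz, sate_flip]
    rw [show -neyman n m Y z - -sate n w = -(neyman n m Y z - sate n w) by ring, abs_neg]
  rw [h2]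
  apply Pr_congr
  intro z' hz'
  have h1 : |neyman n m (obsOutcome n (flipT n w) z') z' - sate n (flipT n w)|
      = |neyman n m (obsOutcome n w z') z' - sate n w| := by
    rw [obs_flip, neyman_flip hm hn hz' (obsOutcome n w z'), sate_flip]
    rw [show -neyman n m (obsOutcome n w z') z' - -sate n w
        = -(neyman n m (obsOutcome n w z') z' - sate n w) by ring, abs_neg]
  rw [h1]

lemma sum_eps_sv_flip {n m : ℕ} (hm : 0 < m) (hn : n = 2 * m) {z' : Fin n → Bool}
    (hz' : z' ∈ Assign n m) (y : Fin n → Bool × Bool) :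
    (∑ j, eps n z' j * sv n (flipT n y) j) = - ∑ j, eps n z' j * sv n y j := by
  have hpt : ∀ j, eps n z' j * sv n (flipT n y) j
      = 2 * eps n z' j - eps n z' j * sv n y j := by
    intro j; rw [sv_flip]; ring
  rw [Finset.sum_congr rfl fun j _ => hpt j, Finset.sum_sub_distrib, ← Finset.mul_sum,
    sum_eps hm hn hz']
  ring

lemma sate_ge_neg_one {n : ℕ} (hn0 : 0 < n) (w : Fin n → Bool × Bool) : -1 ≤ sate n w := by
  unfold sate
  have hn0' : (0:ℝ) < n := by exact_mod_cast hn0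
  rw [le_div_iff₀ hn0']
  have : ∀ j : Fin n, (-1 : ℝ) ≤ b2r (w j).2 - b2r (w j).1 := by
    intro j
    have := b2r_nonneg (w j).2
    have := b2r_le_one (w j).1
    linarith
  calc (-1 : ℝ) * n = ∑ _j : Fin n, (-1 : ℝ) := by
        rw [Finset.sum_const, Finset.card_univ, Fintype.card_fin, nsmul_eq_mul]; ring
    _ ≤ _ := Finset.sum_le_sum fun j _ => this j

lemma sate_le_one {n : ℕ} (hn0 : 0 < n) (w : Fin n → Bool × Bool) : sate n w ≤ 1 := by
  unfold sate
  have hn0' : (0:ℝ) < n := by exact_mod_cast hn0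
  rw [div_le_one hn0']
  have : ∀ j : Fin n, b2r (w j).2 - b2r (w j).1 ≤ 1 := by
    intro j
    have := b2r_le_one (w j).2
    have := b2r_nonneg (w j).1
    linarith
  calc _ ≤ ∑ _j : Fin n, (1:ℝ) := Finset.sum_le_sum fun j _ => this j
    _ = n := by rw [Finset.sum_const, Finset.card_univ, Fintype.card_fin, nsmul_eq_mul]; ring

end Stmt4Aux

open Stmt4Aux in
theorem stmt4 (m : ℕ) (hm : 0 < m) (n : ℕ) (hn : n = 2 * m)
    (y : Fin n → Bool × Bool) (α : ℝ) (hα0 : 0 < α) (hα1 : α < 1)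
    (J : (Fin n → Bool) → Fin n → Bool) :
    1 - α ≤ Pr n m fun z =>
      Lb n m α (fun i => if J z i then !(z i) else obsOutcome n y z i) z ≤ sate n y ∧
        sate n y ≤ Ub n m α (fun i => if J z i then z i else obsOutcome n y z i) z := by
  classical
  have hn0 : 0 < n := by omega
  refine le_trans
    (validity hm hn (fun zz => |∑ j, eps n zz j * sv n y j|) hα0.le)
    (Pr_mono hm hn ?_)
  intro z hz hgood'
  have hgood : α ≤ Pr n m fun z' =>
      |∑ j, eps n z' j * sv n y j| ≥ |∑ j, eps n z j * sv n y j| := hgood'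
  constructor
  · -- lower bound
    set Ym : Fin n → Bool := fun i => if J z i then !(z i) else obsOutcome n y z i with hYm
    have hYimF : ∀ j, (!(Ym j)) = obsOutcome n (flipT n y) z j ∨
        ((!(Ym j)) = z j ∧ obsOutcome n (flipT n y) z j = !(z j)) := by
      intro j
      rw [obs_flip]
      by_cases hJ : J z j = true
      · by_cases he : obsOutcome n y z j = z j
        · right
          constructor
          · simp [hYm, hJ]
          · simp [he]
        · left
          have he' : obsOutcome n y z j = !(z j) := by
            revert he; cases hzz : z j <;> cases hoo : obsOutcome n y z j <;> simp
          simp [hYm, hJ, he']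
      · left
        simp [hYm, hJ]
    have hvalF : α ≤ Pr n m fun z' =>
        |∑ j, eps n z' j * sv n (flipT n y) j| ≥ |∑ j, eps n z j * sv n (flipT n y) j| := by
      refine le_trans hgood (le_of_eq (Pr_congr ?_))
      intro z' hz'
      rw [sum_eps_sv_flip hm hn hz' y, sum_eps_sv_flip hm hn hz y, abs_neg, abs_neg]
    obtain ⟨w', hposs', hp', hsate'⟩ :=
      core hm hn (flipT n y) hz hα1.le (fun j => !(Ym j)) hYimF hvalF
    have hnn : (fun j => !(!(Ym j))) = Ym := funext fun j => Bool.not_not _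
    have hposs : PossibleTable n (flipT n w') Ym z := by
      have h := possible_flip hposs'
      rwa [hnn] at h
    have hp : α ≤ pval n m (flipT n w') Ym z := by
      have hpf := pval_flip hm hn hz w' (fun j => !(Ym j))
      rw [hnn] at hpf
      rw [hpf]; exact hp'
    have hsate : sate n (flipT n w') ≤ sate n y := by
      rw [sate_flip] at hsate' ⊢
      linarith
    have hbdd : BddBelow {t : ℝ | ∃ w, PossibleTable n w Ym z ∧
        α ≤ pval n m w Ym z ∧ sate n w = t} := by
      refine ⟨-1, fun t ht => ?_⟩
      obtain ⟨w, -, -, rfl⟩ := ht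
      exact sate_ge_neg_one hn0 w
    have hmem : sate n (flipT n w') ∈ {t : ℝ | ∃ w, PossibleTable n w Ym z ∧
        α ≤ pval n m w Ym z ∧ sate n w = t} := ⟨flipT n w', hposs, hp, rfl⟩
    exact le_trans (csInf_le hbdd hmem) hsate
  · -- upper bound
    set Yp : Fin n → Bool := fun i => if J z i then z i else obsOutcome n y z i with hYp
    have hYimP : ∀ j, Yp j = obsOutcome n y z j ∨
        (Yp j = z j ∧ obsOutcome n y z j = !(z j)) := by
      intro j
      by_cases hJ : J z j = true
      · by_cases he : obsOutcome n y z j = z j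
        · left
          simp [hYp, hJ, he]
        · right
          have he' : obsOutcome n y z j = !(z j) := by
            revert he; cases hzz : z j <;> cases hoo : obsOutcome n y z j <;> simp
          exact ⟨by simp [hYp, hJ], he'⟩
      · left
        simp [hYp, hJ]
    obtain ⟨w, hposs, hp, hsate⟩ := core hm hn y hz hα1.le Yp hYimP hgood
    have hbdd : BddAbove {t : ℝ | ∃ w, PossibleTable n w Yp z ∧
        α ≤ pval n m w Yp z ∧ sate n w = t} := by
      refine ⟨1, fun t ht => ?_⟩
      obtain ⟨w'', -, -, rfl⟩ := ht
      exact sate_le_one hn0 w''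
    have hmem : sate n w ∈ {t : ℝ | ∃ w', PossibleTable n w' Yp z ∧
        α ≤ pval n m w' Yp z ∧ sate n w' = t} := ⟨w, hposs, hp, rfl⟩
    exact le_trans hsate (le_csSup hbdd hmem)
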